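/- Let (X, Y) be a correlated Brownian motion pair with dynamic correlation ρ, observed at the integer times 1, …, T. Then for each fixed integer time i ≥ 1 and all reals q, p with 0 < q ≤ 1/2 and p > 1/2, the variances Var(γ̂_i^{q,p}), Var((σ̂_i^{x,q,p})²) and Var((σ̂_i^{y,q,p})²) all converge to 0 as T → ∞. -/

import Mathlib

open MeasureTheory ProbabilityTheory Filter Finset

/-- A standard Brownian motion sampled at the integer times. -/
structure IsDiscreteBM {Ω : Type*} [MeasureSpace Ω] (X : ℕ → Ω → ℝ) : Prop where
  meas : ∀ t, Measurable (X t)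
  init : ∀ᵐ ω ∂(ℙ : Measure Ω), X 0 ω = 0
  incr : ∀ s t : ℕ, s ≤ t →
    Measure.map (fun ω => X t ω - X s ω) (ℙ : Measure Ω) = gaussianReal 0 ((t - s : ℕ) : NNReal)
  indep_incr : ∀ u : ℕ → ℕ, Monotone u →
    iIndepFun
      (fun i ω => X (u (i + 1)) ω - X (u i) ω) (ℙ : Measure Ω)

/-- Independence of two processes (as functions into `ℕ → ℝ`). -/
def ProcIndep {Ω : Type*} [MeasureSpace Ω] (A B : ℕ → Ω → ℝ) : Prop :=
  IndepFun (fun ω t => A t ω) (fun ω t => B t ω) (ℙ : Measure Ω)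

/-- A correlated Brownian motion pair with dynamic correlation `ρ`. -/
structure IsCorrBMPair {Ω : Type*} [MeasureSpace Ω] (ρ : ℕ → ℝ) (X Y : ℕ → Ω → ℝ) : Prop where
  bound : ∀ t, |ρ t| ≤ 1
  bmX : IsDiscreteBM X
  bmY : IsDiscreteBM Y
  rep : ∃ X1 Y1 : ℕ → Ω → ℝ, IsDiscreteBM X1 ∧ IsDiscreteBM Y1 ∧
    ProcIndep X1 Y ∧ ProcIndep Y1 X ∧
    (∀ t, ∀ᵐ ω ∂(ℙ : Measure Ω),
      X t ω = ρ t * Y t ω + Real.sqrt (1 - ρ t ^ 2) * X1 t ω) ∧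
    (∀ t, ∀ᵐ ω ∂(ℙ : Measure Ω),
      Y t ω = ρ t * X t ω + Real.sqrt (1 - ρ t ^ 2) * Y1 t ω)

/-- The covariance estimator `γ̂_u^{q,p}`; with `Y := X` it is `(σ̂_u^{x,q,p})²`. -/
noncomputable def gammaHat {Ω : Type*} [MeasureSpace Ω] (X Y : ℕ → Ω → ℝ) (q p : ℝ)
    (T u : ℕ) (ω : Ω) : ℝ :=
  ((T : ℝ) - 1)⁻¹ * ∑ v ∈ (Finset.Icc 1 T).erase u,
    ((v : ℝ) ^ q * X u ω - (v : ℝ) ^ (-p) * X v ω) *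
      ((v : ℝ) ^ q * Y u ω - (v : ℝ) ^ (-p) * Y v ω) / ((u : ℝ) - (v : ℝ)) ^ 2

/-- The dynamic correlation estimator `ρ̂_u^{q,p}`. -/
noncomputable def rhoHat {Ω : Type*} [MeasureSpace Ω] (X Y : ℕ → Ω → ℝ) (q p : ℝ)
    (T u : ℕ) (ω : Ω) : ℝ :=
  gammaHat X Y q p T u ω /
    (Real.sqrt (gammaHat X X q p T u ω) * Real.sqrt (gammaHat Y Y q p T u ω))

section AuxGamma
open Real

-- pointwise bound x^4 ≤ 64 exp(x^2/4)
lemma pow4_le (x : ℝ) : x^4 ≤ 64 * Real.exp ((1/4) * x^2) := by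
  have h : Real.exp ((1/8) * x^2) ≥ 1 + (1/8)*x^2 := by
    have := Real.add_one_le_exp ((1/8)*x^2); linarith
  have h2 : (1 + (1/8)*x^2)^2 ≤ (Real.exp ((1/8)*x^2))^2 := by
    apply pow_le_pow_left₀ (by positivity) h
  have h3 : (Real.exp ((1/8)*x^2))^2 = Real.exp ((1/4)*x^2) := by
    rw [← Real.exp_nat_mul]; ring_nf
  nlinarith [sq_nonneg x, sq_nonneg (x^2), sq_nonneg (1 - (1/8)*x^2)]

-- integrability of x^4 against standard gaussian pdf
lemma int_pdf : Integrable (fun x : ℝ => x^4 * gaussianPDFReal 0 1 x) := by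
  have hI : Integrable (fun x : ℝ => Real.exp (-(1/4) * x^2)) := integrable_exp_neg_mul_sq (by norm_num)
  apply Integrable.mono' (hI.const_mul (64 * (Real.sqrt (2 * Real.pi))⁻¹))
  · exact ((by fun_prop : Measurable fun x : ℝ => x ^ 4).mul (measurable_gaussianPDFReal 0 1)).aestronglyMeasurable
  · refine Eventually.of_forall fun x => ?_
    have hb : gaussianPDFReal 0 1 x = (Real.sqrt (2 * Real.pi))⁻¹ * Real.exp (-(1/2) * x^2) := by
      rw [gaussianPDFReal]; simp only [NNReal.coe_one, mul_one, sub_zero]; ring_nf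
    have hnn : 0 ≤ gaussianPDFReal 0 1 x := gaussianPDFReal_nonneg 0 1 x
    rw [Real.norm_eq_abs, abs_mul, abs_of_nonneg hnn, abs_of_nonneg (by positivity : (0:ℝ) ≤ x^4), hb]
    have h1 : x^4 * ((Real.sqrt (2 * Real.pi))⁻¹ * Real.exp (-(1/2) * x^2))
        ≤ (64 * Real.exp ((1/4) * x^2)) * ((Real.sqrt (2 * Real.pi))⁻¹ * Real.exp (-(1/2) * x^2)) := by
      apply mul_le_mul_of_nonneg_right (pow4_le x) (by positivity)
    refine h1.trans (le_of_eq ?_)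
    have : Real.exp ((1/4) * x^2) * Real.exp (-(1/2) * x^2) = Real.exp (-(1/4) * x^2) := by
      rw [← Real.exp_add]; ring_nf
    calc 64 * Real.exp ((1/4) * x^2) * ((Real.sqrt (2 * Real.pi))⁻¹ * Real.exp (-(1/2) * x^2))
        = 64 * (Real.sqrt (2 * Real.pi))⁻¹ * (Real.exp ((1/4) * x^2) * Real.exp (-(1/2) * x^2)) := by ring
      _ = 64 * (Real.sqrt (2 * Real.pi))⁻¹ * Real.exp (-(1/4) * x^2) := by rw [this]

lemma int4_std : Integrable (fun x : ℝ => x^4) (gaussianReal 0 1) := by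
  rw [gaussianReal_of_var_ne_zero _ one_ne_zero, integrable_withDensity_iff (measurable_gaussianPDF 0 1)
    (Eventually.of_forall fun x => ENNReal.ofReal_lt_top)]
  refine (int_pdf.congr ?_)
  refine Eventually.of_forall fun x => ?_
  simp [gaussianPDF_def, ENNReal.toReal_ofReal (gaussianPDFReal_nonneg 0 1 x)]

noncomputable def M4 : ℝ := ∫ x, x^4 ∂(gaussianReal 0 1)

lemma M4_nonneg : 0 ≤ M4 := integral_nonneg (fun x => by positivity)

lemma gauss_scale (v : NNReal) :
    gaussianReal 0 v = (gaussianReal 0 1).map ((Real.sqrt v) * ·) := by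
  rw [gaussianReal_map_const_mul]
  congr
  · ring
  · ext
    simp [Real.sq_sqrt (v.coe_nonneg)]

lemma int4_gauss (v : NNReal) : Integrable (fun x : ℝ => x^4) (gaussianReal 0 v) := by
  rw [gauss_scale]
  rw [integrable_map_measure (by fun_prop : Measurable fun x : ℝ => x ^ 4).aestronglyMeasurable
    (measurable_const_mul _).aemeasurable]
  have : ((fun x : ℝ => x^4) ∘ ((Real.sqrt v) * ·)) = fun x => (Real.sqrt v)^4 * x^4 := by
    ext x; simp [Function.comp, mul_pow]
  rw [this]
  exact int4_std.const_mul _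

lemma integral4_gauss (v : NNReal) :
    ∫ x, x^4 ∂(gaussianReal 0 v) = M4 * (v:ℝ)^2 := by
  rw [gauss_scale, integral_map (measurable_const_mul _).aemeasurable
    (by fun_prop : Measurable fun x : ℝ => x ^ 4).aestronglyMeasurable]
  simp only [mul_pow]
  rw [integral_const_mul]
  have : (Real.sqrt v)^4 = (v:ℝ)^2 := by
    rw [show (4:ℕ) = 2*2 by rfl, pow_mul, Real.sq_sqrt (v.coe_nonneg)]
  rw [this, M4, mul_comm]

section BM
variable {Ω : Type*} [MeasureSpace Ω] [IsProbabilityMeasure (ℙ : Measure Ω)]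
  {Z : ℕ → Ω → ℝ}

lemma BM.map_eq (hZ : IsDiscreteBM Z) (t : ℕ) :
    Measure.map (Z t) (ℙ : Measure Ω) = gaussianReal 0 (t : NNReal) := by
  have h0 := hZ.incr 0 t (Nat.zero_le t)
  have : (fun ω => Z t ω - Z 0 ω) =ᵐ[(ℙ : Measure Ω)] Z t := by
    filter_upwards [hZ.init] with ω h using by simp [h]
  rw [← Measure.map_congr this, h0]
  simp

lemma BM.int4 (hZ : IsDiscreteBM Z) (t : ℕ) :
    Integrable (fun ω => (Z t ω)^4) (ℙ : Measure Ω) := by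
  have := (integrable_map_measure (by fun_prop : Measurable fun x : ℝ => x ^ 4).aestronglyMeasurable
    (hZ.meas t).aemeasurable).mp (by rw [BM.map_eq hZ t]; exact int4_gauss _)
  exact this

lemma BM.integral4 (hZ : IsDiscreteBM Z) (t : ℕ) :
    ∫ ω, (Z t ω)^4 ∂(ℙ : Measure Ω) = M4 * (t:ℝ)^2 := by
  have h := integral4_gauss (t : NNReal)
  rw [← BM.map_eq hZ t, integral_map (hZ.meas t).aemeasurable
    (by fun_prop : Measurable fun x : ℝ => x ^ 4).aestronglyMeasurable] at h
  simpa using h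

end BM

section VarSum
variable {Ω : Type*} [MeasureSpace Ω] [IsProbabilityMeasure (ℙ : Measure Ω)]

lemma variance_sum_le {ι : Type*} (s : Finset ι) (f : ι → Ω → ℝ)
    (hf : ∀ v ∈ s, MemLp (f v) 2 (ℙ : Measure Ω)) :
    variance (fun ω => ∑ v ∈ s, f v ω) (ℙ : Measure Ω)
      ≤ (s.card : ℝ) * ∑ v ∈ s, variance (f v) (ℙ : Measure Ω) := by
  classical
  set μ : Measure Ω := ℙ
  have hS : MemLp (fun ω => ∑ v ∈ s, f v ω) 2 μ := memLp_finset_sum s hf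
  set g : ι → Ω → ℝ := fun v ω => f v ω - ∫ x, f v x ∂μ with hg
  have hgmem : ∀ v ∈ s, MemLp (g v) 2 μ := fun v hv => (hf v hv).sub (memLp_const _)
  have hES : ∫ x, (∑ v ∈ s, f v x) ∂μ = ∑ v ∈ s, ∫ x, f v x ∂μ :=
    integral_finset_sum s (fun v hv => (hf v hv).integrable one_le_two)
  have hvar : variance (fun ω => ∑ v ∈ s, f v ω) μ
      = ∫ ω, (∑ v ∈ s, g v ω)^2 ∂μ := by
    rw [variance_eq_integral hS.aestronglyMeasurable.aemeasurable]
    congr 1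
    ext ω
    simp only [Pi.pow_apply, Pi.sub_apply, hES, hg]
    rw [← Finset.sum_sub_distrib]
  have hgsq : ∀ v ∈ s, Integrable (fun ω => (g v ω)^2) μ := fun v hv =>
    (hgmem v hv).integrable_sq
  have hpt : ∀ ω, (∑ v ∈ s, g v ω)^2 ≤ (s.card : ℝ) * ∑ v ∈ s, (g v ω)^2 := by
    intro ω
    exact_mod_cast sq_sum_le_card_mul_sum_sq (s := s) (f := fun v => g v ω)
  have hSint : Integrable (fun ω => (∑ v ∈ s, g v ω)^2) μ := by
    have : MemLp (fun ω => ∑ v ∈ s, g v ω) 2 μ := memLp_finset_sum s hgmem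
    exact this.integrable_sq
  have hRint : Integrable (fun ω => (s.card : ℝ) * ∑ v ∈ s, (g v ω)^2) μ :=
    ((integrable_finset_sum s hgsq).const_mul _)
  rw [hvar]
  calc ∫ ω, (∑ v ∈ s, g v ω)^2 ∂μ
      ≤ ∫ ω, (s.card : ℝ) * ∑ v ∈ s, (g v ω)^2 ∂μ :=
        integral_mono hSint hRint hpt
    _ = (s.card : ℝ) * ∑ v ∈ s, ∫ ω, (g v ω)^2 ∂μ := by
        rw [integral_const_mul, integral_finset_sum s hgsq]
    _ = (s.card : ℝ) * ∑ v ∈ s, variance (f v) μ := by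
        congr 1
        refine Finset.sum_congr rfl fun v hv => ?_
        rw [variance_eq_integral (hf v hv).aestronglyMeasurable.aemeasurable]

end VarSum

section Terms
variable {Ω : Type*} [MeasureSpace Ω] [IsProbabilityMeasure (ℙ : Measure Ω)]
  {Z W : ℕ → Ω → ℝ}

lemma A4_bound (hZ : IsDiscreteBM Z) {i v : ℕ} (hi : 1 ≤ i) (hv1 : 1 ≤ v)
    {q p : ℝ} (hq0 : 0 < q) (hq : q ≤ 1/2) (hp : 1/2 < p) :
    Integrable (fun ω => ((v:ℝ)^q * Z i ω - (v:ℝ)^(-p) * Z v ω)^4) (ℙ : Measure Ω) ∧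
    ∫ ω, ((v:ℝ)^q * Z i ω - (v:ℝ)^(-p) * Z v ω)^4 ∂(ℙ : Measure Ω)
      ≤ 16 * M4 * (i:ℝ)^2 * (v:ℝ)^2 := by
  set c : ℝ := (v:ℝ)^q with hc
  set d : ℝ := (v:ℝ)^(-p) with hd
  have hv1' : (1:ℝ) ≤ (v:ℝ) := by exact_mod_cast hv1
  have hi1' : (1:ℝ) ≤ (i:ℝ) := by exact_mod_cast hi
  have hcnn : 0 ≤ c := Real.rpow_nonneg (by positivity) q
  have hdnn : 0 ≤ d := Real.rpow_nonneg (by positivity) (-p)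
  -- pointwise bound
  have hpt : ∀ ω, ((c * Z i ω - d * Z v ω)^4)
      ≤ 8 * c^4 * (Z i ω)^4 + 8 * d^4 * (Z v ω)^4 := by
    intro ω
    nlinarith [sq_nonneg (c * Z i ω - d * Z v ω), sq_nonneg (c * Z i ω + d * Z v ω),
      sq_nonneg ((c * Z i ω)^2 - (d * Z v ω)^2), sq_nonneg ((c * Z i ω)^2 + (d * Z v ω)^2)]
  have hdom : Integrable (fun ω => 8 * c^4 * (Z i ω)^4 + 8 * d^4 * (Z v ω)^4) (ℙ : Measure Ω) :=
    ((BM.int4 hZ i).const_mul _).add ((BM.int4 hZ v).const_mul _)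
  have hmeas : AEStronglyMeasurable (fun ω => (c * Z i ω - d * Z v ω)^4) (ℙ : Measure Ω) := by
    apply Measurable.aestronglyMeasurable
    exact (((hZ.meas i).const_mul c).sub ((hZ.meas v).const_mul d)).pow_const 4
  have hint : Integrable (fun ω => (c * Z i ω - d * Z v ω)^4) (ℙ : Measure Ω) := by
    apply hdom.mono' hmeas
    refine Eventually.of_forall fun ω => ?_
    rw [Real.norm_eq_abs, abs_of_nonneg (by positivity)]
    exact hpt ω
  refine ⟨hint, ?_⟩
  have h1 : ∫ ω, ((c * Z i ω - d * Z v ω)^4) ∂(ℙ : Measure Ω)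
      ≤ ∫ ω, (8 * c^4 * (Z i ω)^4 + 8 * d^4 * (Z v ω)^4) ∂(ℙ : Measure Ω) :=
    integral_mono hint hdom hpt
  rw [integral_add ((BM.int4 hZ i).const_mul _) ((BM.int4 hZ v).const_mul _)] at h1
  simp only [integral_const_mul] at h1
  rw [BM.integral4 hZ i, BM.integral4 hZ v] at h1
  -- exponent bounds
  have hM4 : 0 ≤ M4 := M4_nonneg
  have hc4 : c^4 ≤ (v:ℝ)^2 := by
    rw [hc, ← Real.rpow_natCast ((v:ℝ)^q) 4, ← Real.rpow_mul (by positivity)]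
    calc (v:ℝ)^(q * 4) ≤ (v:ℝ)^(2:ℝ) :=
          Real.rpow_le_rpow_of_exponent_le hv1' (by linarith)
      _ = (v:ℝ)^2 := by rw [Real.rpow_two]
  have hd4 : d^4 * (v:ℝ)^2 ≤ 1 := by
    rw [hd, ← Real.rpow_natCast ((v:ℝ)^(-p)) 4, ← Real.rpow_mul (by positivity)]
    have : ((v:ℝ)^2 : ℝ) = (v:ℝ)^(2:ℝ) := (Real.rpow_two _).symm
    rw [this, ← Real.rpow_add (by positivity)]
    calc (v:ℝ)^(-p * 4 + 2) ≤ (v:ℝ)^(0:ℝ) :=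
          Real.rpow_le_rpow_of_exponent_le hv1' (by linarith)
      _ = 1 := Real.rpow_zero _
  have hfin : 8 * c^4 * (M4 * (i:ℝ)^2) + 8 * d^4 * (M4 * (v:ℝ)^2)
      ≤ 16 * M4 * (i:ℝ)^2 * (v:ℝ)^2 := by
    have hii : (1:ℝ) ≤ (i:ℝ)^2 := by nlinarith
    have hvv : (1:ℝ) ≤ (v:ℝ)^2 := by nlinarith
    have h2 : 8 * c^4 * (M4 * (i:ℝ)^2) ≤ 8 * M4 * (i:ℝ)^2 * (v:ℝ)^2 := by
      have := mul_le_mul_of_nonneg_left hc4 (show (0:ℝ) ≤ 8 * M4 * (i:ℝ)^2 by positivity)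
      nlinarith [this]
    have h3 : 8 * d^4 * (M4 * (v:ℝ)^2) ≤ 8 * M4 := by
      have := mul_le_mul_of_nonneg_left hd4 (show (0:ℝ) ≤ 8 * M4 by positivity)
      nlinarith [this]
    have h4 : (8:ℝ) * M4 ≤ 8 * M4 * (i:ℝ)^2 * (v:ℝ)^2 := by
      have h5 : (1:ℝ) ≤ (i:ℝ)^2 * (v:ℝ)^2 := one_le_mul_of_one_le_of_one_le hii hvv
      have := mul_le_mul_of_nonneg_left h5 (show (0:ℝ) ≤ 8 * M4 by positivity)
      nlinarith [this]
    linarith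
  linarith

end Terms

lemma amgm4 (a b : ℝ) : (a*b)^2 ≤ (a^4+b^4)/2 := by nlinarith [sq_nonneg (a^2-b^2)]

lemma aux_div {D v2 E K : ℝ} (hD : 0 < D) (hK : 0 ≤ K) (h : v2 ≤ E * D) (hv2 : 0 ≤ v2) :
    K * v2 * (D^2)⁻¹ ≤ K * E * D⁻¹ := by
  have h1 : K * v2 * D⁻¹ ≤ K * E := by
    calc K * v2 * D⁻¹ ≤ K * (E * D) * D⁻¹ :=
          mul_le_mul_of_nonneg_right (mul_le_mul_of_nonneg_left h hK) (by positivity)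
      _ = K * E := by field_simp
  calc K * v2 * (D^2)⁻¹ = K * v2 * D⁻¹ * D⁻¹ := by rw [pow_two, mul_inv]; ring
    _ ≤ K * E * D⁻¹ := mul_le_mul_of_nonneg_right h1 (by positivity)

lemma nat_sq_bound {i v : ℕ} (hi : 1 ≤ i) (hv1 : 1 ≤ v) (hvi : v ≠ i) :
    ((v:ℝ))^2 ≤ ((i:ℝ)+1)^2 * ((i:ℝ) - (v:ℝ))^2 := by
  rcases lt_or_gt_of_ne hvi with hlt | hgt
  · have h1' : (v:ℝ) + 1 ≤ (i:ℝ) := by exact_mod_cast hlt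
    have hvnn : (0:ℝ) ≤ (v:ℝ) := Nat.cast_nonneg v
    have e1 : (v:ℝ)^2 ≤ ((i:ℝ)+1)^2 := by nlinarith
    have e2 : (1:ℝ) ≤ ((i:ℝ) - (v:ℝ))^2 := by nlinarith
    calc ((v:ℝ))^2 ≤ ((i:ℝ)+1)^2 := e1
      _ = ((i:ℝ)+1)^2 * 1 := by ring
      _ ≤ ((i:ℝ)+1)^2 * ((i:ℝ) - (v:ℝ))^2 := by
          apply mul_le_mul_of_nonneg_left e2 (by positivity)
  · have h1' : (i:ℝ) + 1 ≤ (v:ℝ) := by exact_mod_cast hgt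
    have hinn : (1:ℝ) ≤ (i:ℝ) := by exact_mod_cast hi
    have key : (v:ℝ) ≤ ((i:ℝ)+1)*((v:ℝ)-(i:ℝ)) := by
      have h0 : (0:ℝ) ≤ (i:ℝ) * ((v:ℝ)-(i:ℝ)-1) := mul_nonneg (by linarith) (by linarith)
      nlinarith [h0]
    have hvnn : (0:ℝ) ≤ (v:ℝ) := Nat.cast_nonneg v
    have := mul_self_le_mul_self hvnn key
    calc ((v:ℝ))^2 = (v:ℝ) * (v:ℝ) := sq ((v:ℝ))
      _ ≤ (((i:ℝ)+1)*((v:ℝ)-(i:ℝ))) * (((i:ℝ)+1)*((v:ℝ)-(i:ℝ))) := this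
      _ = ((i:ℝ)+1)^2 * ((i:ℝ) - (v:ℝ))^2 := by ring

section Terms2
variable {Ω : Type*} [MeasureSpace Ω] [IsProbabilityMeasure (ℙ : Measure Ω)]
  {Z W : ℕ → Ω → ℝ}

lemma term_bound (hZ : IsDiscreteBM Z) (hW : IsDiscreteBM W) {i v : ℕ} (hi : 1 ≤ i)
    (hv1 : 1 ≤ v) (hvi : v ≠ i)
    {q p : ℝ} (hq0 : 0 < q) (hq : q ≤ 1/2) (hp : 1/2 < p) :
    MemLp (fun ω => ((v:ℝ)^q * Z i ω - (v:ℝ)^(-p) * Z v ω) *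
        ((v:ℝ)^q * W i ω - (v:ℝ)^(-p) * W v ω) / ((i:ℝ) - (v:ℝ))^2) 2 (ℙ : Measure Ω) ∧
    Integrable (fun ω => (((v:ℝ)^q * Z i ω - (v:ℝ)^(-p) * Z v ω) *
        ((v:ℝ)^q * W i ω - (v:ℝ)^(-p) * W v ω) / ((i:ℝ) - (v:ℝ))^2)^2) (ℙ : Measure Ω) ∧
    ∫ ω, (((v:ℝ)^q * Z i ω - (v:ℝ)^(-p) * Z v ω) *
        ((v:ℝ)^q * W i ω - (v:ℝ)^(-p) * W v ω) / ((i:ℝ) - (v:ℝ))^2)^2 ∂(ℙ : Measure Ω)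
      ≤ 16 * M4 * (i:ℝ)^2 * ((i:ℝ)+1)^2 * (((i:ℝ) - (v:ℝ))^2)⁻¹ := by
  obtain ⟨hAint, hAle⟩ := A4_bound hZ hi hv1 hq0 hq hp (p := p)
  obtain ⟨hBint, hBle⟩ := A4_bound hW hi hv1 hq0 hq hp (p := p)
  set c : ℝ := (v:ℝ)^q
  set d : ℝ := (v:ℝ)^(-p)
  set A : Ω → ℝ := fun ω => c * Z i ω - d * Z v ω with hA
  set B : Ω → ℝ := fun ω => c * W i ω - d * W v ω with hB
  set D : ℝ := ((i:ℝ) - (v:ℝ))^2 with hDdef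
  have hne : (i:ℝ) - (v:ℝ) ≠ 0 := by
    rw [sub_ne_zero]
    exact_mod_cast (Ne.symm hvi)
  have hD0 : 0 < D := by positivity
  have hM4 : 0 ≤ M4 := M4_nonneg
  have hpt : ∀ ω, (A ω * B ω / D)^2 ≤ ((A ω)^4 + (B ω)^4) / 2 * (D^2)⁻¹ := by
    intro ω
    rw [div_pow]
    rw [div_eq_mul_inv]
    exact mul_le_mul_of_nonneg_right (amgm4 (A ω) (B ω)) (by positivity)
  have hdom : Integrable (fun ω => ((A ω)^4 + (B ω)^4) / 2 * (D^2)⁻¹) (ℙ : Measure Ω) :=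
    (((hAint.add hBint).div_const 2).mul_const _)
  have hmeasA : Measurable A := ((hZ.meas i).const_mul c).sub ((hZ.meas v).const_mul d)
  have hmeasB : Measurable B := ((hW.meas i).const_mul c).sub ((hW.meas v).const_mul d)
  have hmeast : Measurable (fun ω => A ω * B ω / D) := (hmeasA.mul hmeasB).div_const D
  have hint2 : Integrable (fun ω => (A ω * B ω / D)^2) (ℙ : Measure Ω) := by
    apply hdom.mono' (hmeast.pow_const 2).aestronglyMeasurable
    refine Eventually.of_forall fun ω => ?_
    rw [Real.norm_eq_abs, abs_of_nonneg (by positivity)]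
    exact hpt ω
  refine ⟨(memLp_two_iff_integrable_sq hmeast.aestronglyMeasurable).mpr hint2, hint2, ?_⟩
  have h1 : ∫ ω, (A ω * B ω / D)^2 ∂(ℙ : Measure Ω)
      ≤ ∫ ω, ((A ω)^4 + (B ω)^4) / 2 * (D^2)⁻¹ ∂(ℙ : Measure Ω) :=
    integral_mono hint2 hdom hpt
  have h2 : ∫ ω, ((A ω)^4 + (B ω)^4) / 2 * (D^2)⁻¹ ∂(ℙ : Measure Ω)
      = ((∫ ω, (A ω)^4 ∂(ℙ : Measure Ω)) + ∫ ω, (B ω)^4 ∂(ℙ : Measure Ω)) / 2 * (D^2)⁻¹ := by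
    rw [integral_mul_const, integral_div, integral_add hAint hBint]
  have h3 : ((∫ ω, (A ω)^4 ∂(ℙ : Measure Ω)) + ∫ ω, (B ω)^4 ∂(ℙ : Measure Ω)) / 2 * (D^2)⁻¹
      ≤ (16 * M4 * (i:ℝ)^2 * (v:ℝ)^2) * (D^2)⁻¹ := by
    apply mul_le_mul_of_nonneg_right _ (by positivity)
    linarith
  have hv2D : (v:ℝ)^2 ≤ ((i:ℝ)+1)^2 * D := by
    rw [hDdef]; exact nat_sq_bound hi hv1 hvi
  have h4 : (16 * M4 * (i:ℝ)^2 * (v:ℝ)^2) * (D^2)⁻¹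
      ≤ 16 * M4 * (i:ℝ)^2 * ((i:ℝ)+1)^2 * D⁻¹ := by
    have := aux_div hD0 (show (0:ℝ) ≤ 16 * M4 * (i:ℝ)^2 by positivity) hv2D (by positivity)
    calc (16 * M4 * (i:ℝ)^2 * (v:ℝ)^2) * (D^2)⁻¹
        = (16 * M4 * (i:ℝ)^2) * (v:ℝ)^2 * (D^2)⁻¹ := by ring
      _ ≤ (16 * M4 * (i:ℝ)^2) * ((i:ℝ)+1)^2 * D⁻¹ := this
      _ = 16 * M4 * (i:ℝ)^2 * ((i:ℝ)+1)^2 * D⁻¹ := by ring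
  calc ∫ ω, (A ω * B ω / D)^2 ∂(ℙ : Measure Ω) ≤ _ := h1
    _ = _ := h2
    _ ≤ _ := h3
    _ ≤ _ := h4

end Terms2
section Final
variable {Ω : Type*} [MeasureSpace Ω] [IsProbabilityMeasure (ℙ : Measure Ω)]
  {Z W : ℕ → Ω → ℝ}

lemma summable_e (i : ℕ) : Summable (fun v : ℕ => (((i:ℝ) - (v:ℝ))^2)⁻¹) := by
  rw [← summable_nat_add_iff (i+1)]
  have hs : Summable (fun n : ℕ => 1 / ((n:ℝ))^2) :=
    summable_one_div_nat_pow.mpr one_lt_two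
  have hs1 : Summable (fun n : ℕ => 1 / (((n:ℝ))+1)^2) := by
    have := (summable_nat_add_iff 1).mpr hs
    refine this.congr fun n => ?_
    push_cast
    ring
  refine hs1.congr fun n => ?_
  have : ((i:ℝ) - ((n + (i+1) : ℕ):ℝ)) = -((n:ℝ)+1) := by push_cast; ring
  rw [this]
  rw [neg_pow, one_div]
  simp

lemma gamma_var_tendsto (hZ : IsDiscreteBM Z) (hW : IsDiscreteBM W) (i : ℕ) (hi : 1 ≤ i)
    (q p : ℝ) (hq0 : 0 < q) (hq : q ≤ 1/2) (hp : 1/2 < p) :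
    Tendsto (fun T => variance (gammaHat Z W q p T i) (ℙ : Measure Ω)) atTop (nhds 0) := by
  classical
  set K : ℝ := 16 * M4 * (i:ℝ)^2 * ((i:ℝ)+1)^2 with hK
  have hKnn : 0 ≤ K := by
    have := M4_nonneg
    positivity
  set e : ℕ → ℝ := fun v => (((i:ℝ) - (v:ℝ))^2)⁻¹ with he
  set Ce : ℝ := ∑' v, e v with hCe
  have hCe_nn : 0 ≤ Ce := tsum_nonneg (fun v => by positivity)
  have hsum_e : ∀ T : ℕ, ∑ v ∈ (Finset.Icc 1 T).erase i, e v ≤ Ce := fun T =>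
    Summable.sum_le_tsum _ (fun v _ => by positivity) (summable_e i)
  -- the term function
  set f : ℕ → Ω → ℝ := fun v ω =>
    ((v:ℝ)^q * Z i ω - (v:ℝ)^(-p) * Z v ω) *
      ((v:ℝ)^q * W i ω - (v:ℝ)^(-p) * W v ω) / ((i:ℝ) - (v:ℝ))^2 with hf
  -- pointwise-in-T variance bound
  have hbound : ∀ T : ℕ, variance (gammaHat Z W q p T i) (ℙ : Measure Ω)
      ≤ (((T:ℝ) - 1)⁻¹)^2 * ((T:ℝ) * (K * Ce)) := by
    intro T
    set s : Finset ℕ := (Finset.Icc 1 T).erase i with hs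
    have hmem : ∀ v ∈ s, 1 ≤ v ∧ v ≠ i := by
      intro v hv
      rw [hs, Finset.mem_erase, Finset.mem_Icc] at hv
      exact ⟨hv.2.1, hv.1⟩
    have htb := fun (v : ℕ) (hv : v ∈ s) =>
      term_bound hZ hW hi (hmem v hv).1 (hmem v hv).2 hq0 hq hp (p := p)
    have hge : gammaHat Z W q p T i
        = fun ω => ((T:ℝ) - 1)⁻¹ * ∑ v ∈ s, f v ω := rfl
    rw [hge, variance_const_mul]
    have h1 : variance (fun ω => ∑ v ∈ s, f v ω) (ℙ : Measure Ω)
        ≤ (s.card : ℝ) * ∑ v ∈ s, variance (f v) (ℙ : Measure Ω) :=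
      variance_sum_le s f (fun v hv => (htb v hv).1)
    have h2 : ∀ v ∈ s, variance (f v) (ℙ : Measure Ω) ≤ K * e v := by
      intro v hv
      have hvar_le : variance (f v) (ℙ : Measure Ω)
          ≤ ∫ ω, (f v ω)^2 ∂(ℙ : Measure Ω) := by
        have := variance_le_expectation_sq (μ := (ℙ : Measure Ω))
          (X := f v) ((htb v hv).1.aestronglyMeasurable)
        exact this
      exact hvar_le.trans (htb v hv).2.2
    have h3 : ∑ v ∈ s, variance (f v) (ℙ : Measure Ω) ≤ K * Ce := by
      calc ∑ v ∈ s, variance (f v) (ℙ : Measure Ω) ≤ ∑ v ∈ s, K * e v :=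
            Finset.sum_le_sum h2
        _ = K * ∑ v ∈ s, e v := by rw [Finset.mul_sum]
        _ ≤ K * Ce := mul_le_mul_of_nonneg_left (hsum_e T) hKnn
    have hcard : (s.card : ℝ) ≤ (T:ℝ) := by
      have h4 : s.card ≤ (Finset.Icc 1 T).card := Finset.card_erase_le
      have h5 : (Finset.Icc 1 T).card = T := by
        rw [Nat.card_Icc]; omega
      exact_mod_cast h4.trans_eq h5
    have hvs_nn : 0 ≤ ∑ v ∈ s, variance (f v) (ℙ : Measure Ω) :=
      Finset.sum_nonneg fun v _ => variance_nonneg _ _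
    calc (((T:ℝ) - 1)⁻¹)^2 * variance (fun ω => ∑ v ∈ s, f v ω) (ℙ : Measure Ω)
        ≤ (((T:ℝ) - 1)⁻¹)^2 * ((s.card : ℝ) * ∑ v ∈ s, variance (f v) (ℙ : Measure Ω)) :=
          mul_le_mul_of_nonneg_left h1 (by positivity)
      _ ≤ (((T:ℝ) - 1)⁻¹)^2 * ((T:ℝ) * (K * Ce)) := by
          apply mul_le_mul_of_nonneg_left _ (by positivity)
          have := mul_le_mul hcard h3 hvs_nn (Nat.cast_nonneg T)
          exact this
  -- squeeze
  have hub : ∀ᶠ T : ℕ in atTop, variance (gammaHat Z W q p T i) (ℙ : Measure Ω)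
      ≤ (4 * (K * Ce)) / (T:ℝ) := by
    filter_upwards [eventually_ge_atTop 2] with T hT2
    have hT2' : (2:ℝ) ≤ (T:ℝ) := by exact_mod_cast hT2
    refine (hbound T).trans ?_
    have hT1 : (1:ℝ) ≤ (T:ℝ) - 1 := by linarith
    have hTpos : (0:ℝ) < (T:ℝ) := by linarith
    have hstep : (((T:ℝ) - 1)⁻¹)^2 * (T:ℝ) ≤ 4 / (T:ℝ) := by
      rw [inv_pow, inv_mul_eq_div, div_le_div_iff₀ (by positivity) hTpos]
      nlinarith [mul_nonneg (by linarith : (0:ℝ) ≤ (T:ℝ) - 2) (by linarith : (0:ℝ) ≤ 3*(T:ℝ) - 2)]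
    calc (((T:ℝ) - 1)⁻¹)^2 * ((T:ℝ) * (K * Ce))
        = ((((T:ℝ) - 1)⁻¹)^2 * (T:ℝ)) * (K * Ce) := by ring
      _ ≤ (4 / (T:ℝ)) * (K * Ce) := by
          apply mul_le_mul_of_nonneg_right hstep (by positivity)
      _ = (4 * (K * Ce)) / (T:ℝ) := by ring
  have hlb : ∀ T : ℕ, 0 ≤ variance (gammaHat Z W q p T i) (ℙ : Measure Ω) :=
    fun T => variance_nonneg _ _
  refine tendsto_of_tendsto_of_tendsto_of_le_of_le' tendsto_const_nhds
    (tendsto_const_div_atTop_nhds_zero_nat (4 * (K * Ce)))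
    (Eventually.of_forall hlb) hub

end Final

end AuxGamma

theorem statement2 {Ω : Type*} [MeasureSpace Ω] [IsProbabilityMeasure (ℙ : Measure Ω)]
    (ρ : ℕ → ℝ) (X Y : ℕ → Ω → ℝ) (h : IsCorrBMPair ρ X Y)
    (i : ℕ) (hi : 1 ≤ i) (q p : ℝ) (hq0 : 0 < q) (hq : q ≤ 1 / 2) (hp : 1 / 2 < p) :
    Tendsto (fun T => variance (gammaHat X Y q p T i) (ℙ : Measure Ω)) atTop (nhds 0) ∧
    Tendsto (fun T => variance (gammaHat X X q p T i) (ℙ : Measure Ω)) atTop (nhds 0) ∧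
    Tendsto (fun T => variance (gammaHat Y Y q p T i) (ℙ : Measure Ω)) atTop (nhds 0) := by
  exact ⟨gamma_var_tendsto h.bmX h.bmY i hi q p hq0 hq hp,
    gamma_var_tendsto h.bmX h.bmX i hi q p hq0 hq hp,
    gamma_var_tendsto h.bmY h.bmY i hi q p hq0 hq hp⟩
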